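/- Let d ≥ 2 and let p : {1,...,2^{d-1}+3} → ℝ^d be the configuration of the previous statement. The point q₂ = (-21/20,9/10,0,...,0) is the reflection of p₂ = (-1/4,1/2,0,...,0) in the affine hyperplane of ℝ^d spanned by the points p₁, p₄, p₆, ..., p_{2^{d-1}+2}, and q₃ = (1/4,1/2,0,...,0) is the reflection of p₃ = (21/20,9/10,0,...,0) in the affine hyperplane spanned by p₁, p₅, p₇, ..., p_{2^{d-1}+3}. -/

import Mathlib

/-- The point of ℝ^d with first coordinate `a`, second coordinate `b`, and remaining
`d-2` coordinates given by `w`. -/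
noncomputable def vec (d : ℕ) (a b : ℝ) (w : Fin (d-2) → ℝ) : EuclideanSpace ℝ (Fin d) :=
  WithLp.toLp 2 fun (i : Fin d) => if i.1 = 0 then a else if i.1 = 1 then b else
    if h : i.1 - 2 < d - 2 then w ⟨i.1 - 2, h⟩ else 0

/-- Membership in the "hub" vertex set {1, 4, 5, ..., 2^(d-1)+3} (1-based labels). -/
def IsHub (d m : ℕ) : Prop := m = 1 ∨ (4 ≤ m ∧ m ≤ 2^(d-1)+3)

/-- The edge set of the graph G_d on {1, ..., 2^(d-1)+3}: all pairs of hub vertices;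
{1,2} and {2,2k} for 2 ≤ k ≤ 2^(d-2)+1; {1,3} and {3,2k+1} for 2 ≤ k ≤ 2^(d-2)+1;
and {2,3}. -/
def Ed (d : ℕ) : Set (ℕ × ℕ) :=
  {e | (IsHub d e.1 ∧ IsHub d e.2 ∧ e.1 ≠ e.2) ∨ e = (1,2) ∨
    (∃ k, 2 ≤ k ∧ k ≤ 2^(d-2)+1 ∧ e = (2, 2*k)) ∨ e = (1,3) ∨
    (∃ k, 2 ≤ k ∧ k ≤ 2^(d-2)+1 ∧ e = (3, 2*k+1)) ∨ e = (2,3)}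


lemma sum_w_zero (d : ℕ) (w : ℕ → Fin (d-2) → ℝ)
    (hw : ∀ k, 1 ≤ k → k ≤ 2^(d-2) → ∀ i, w k i = 1 ∨ w k i = -1)
    (hwinj : ∀ k l, 1 ≤ k → k ≤ 2^(d-2) → 1 ≤ l → l ≤ 2^(d-2) → w k = w l → k = l)
    (i : Fin (d-2)) : ∑ k ∈ Finset.Icc 1 (2^(d-2)), w k i = 0 := by
  classical
  set n := 2^(d-2) with hn
  set C : Finset (Fin (d-2) → ℝ) := Fintype.piFinset (fun _ => ({1,-1} : Finset ℝ)) with hC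
  have hinj : ∀ x ∈ Finset.Icc 1 n, ∀ y ∈ Finset.Icc 1 n, w x = w y → x = y := by
    intro x hx y hy h
    simp only [Finset.mem_Icc] at hx hy
    exact hwinj x y hx.1 hx.2 hy.1 hy.2 h
  have hsub : (Finset.Icc 1 n).image w ⊆ C := by
    intro f hf
    simp only [Finset.mem_image, Finset.mem_Icc] at hf
    obtain ⟨k, ⟨hk1, hk2⟩, rfl⟩ := hf
    simp only [hC, Fintype.mem_piFinset, Finset.mem_insert, Finset.mem_singleton]
    exact fun j => hw k hk1 hk2 j
  have hcard : C.card ≤ ((Finset.Icc 1 n).image w).card := by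
    rw [Finset.card_image_of_injOn hinj]
    have h2 : ((1:ℝ) : ℝ) ≠ -1 := by norm_num
    have : C.card = 2^(d-2) := by
      rw [hC, Fintype.card_piFinset]
      simp [Finset.card_insert_of_notMem, h2]
    simp [this, Nat.card_Icc, hn]
  have heq : (Finset.Icc 1 n).image w = C := Finset.eq_of_subset_of_card_le hsub hcard
  have h1 : ∑ k ∈ Finset.Icc 1 n, w k i = ∑ f ∈ C, f i := by
    rw [← heq, Finset.sum_image hinj]
  rw [h1]
  apply Finset.sum_involution (fun f _ => -f)
  · intro f _; simp
  · intro f hf hfi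
    intro heq'
    have hfi2 := congrFun heq' i
    simp only [Pi.neg_apply] at hfi2
    have : f i = 1 ∨ f i = -1 := by
      simp only [hC, Fintype.mem_piFinset, Finset.mem_insert, Finset.mem_singleton] at hf
      exact hf i
    rcases this with h | h <;> rw [h] at hfi2 <;> norm_num at hfi2
  · intro f _; simp
  · intro f hf
    simp only [hC, Fintype.mem_piFinset, Finset.mem_insert, Finset.mem_singleton] at hf ⊢
    intro j
    rcases hf j with h | h <;> simp [h]


open RealInnerProductSpace

lemma master (d : ℕ) (hd : 2 ≤ d) (ε : ℝ) (hε : ε * ε = 1)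
    (w : ℕ → Fin (d-2) → ℝ)
    (hsum : ∀ i : Fin (d-2), ∑ k ∈ Finset.Icc 1 (2^(d-2)), w k i = 0)
    (Q : ℕ → EuclideanSpace ℝ (Fin d))
    (P1 a b : EuclideanSpace ℝ (Fin d))
    (hP1 : P1 = vec d 0 2 (fun _ => 0))
    (hQ : ∀ j, 2 ≤ j → j ≤ 2^(d-2)+1 → Q j = vec d ε 0 (w (j-1)))
    (ha : a = vec d (ε * (1/4)) (1/2) (fun _ => 0))
    (hb : b = vec d (ε * (21/20)) (9/10) (fun _ => 0)) :
    midpoint ℝ a b ∈ affineSpan ℝ ({P1} ∪ {x | ∃ j, 2 ≤ j ∧ j ≤ 2^(d-2)+1 ∧ x = Q j}) ∧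
    ∀ v ∈ (affineSpan ℝ ({P1} ∪ {x | ∃ j, 2 ≤ j ∧ j ≤ 2^(d-2)+1 ∧ x = Q j})).direction,
      ⟪a - b, v⟫ = 0 := by
  classical
  set n := 2^(d-2) with hn
  have hn1 : 1 ≤ n := Nat.one_le_two_pow
  have hnne : ((n:ℝ)) ≠ 0 := by positivity
  set s : Set (EuclideanSpace ℝ (Fin d)) :=
    ({P1} ∪ {x | ∃ j, 2 ≤ j ∧ j ≤ n+1 ∧ x = Q j}) with hs
  have hP1s : P1 ∈ s := Or.inl rfl
  have hQmem : ∀ j, 2 ≤ j → j ≤ n+1 → Q j ∈ s := fun j h1 h2 => Or.inr ⟨j, h1, h2, rfl⟩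
  have h0lt : (0:ℕ) < d := by omega
  have h1lt : (1:ℕ) < d := by omega
  set i0 : Fin d := ⟨0, h0lt⟩
  set i1 : Fin d := ⟨1, h1lt⟩
  -- coordinates of difference vectors
  have hQc : ∀ j, 2 ≤ j → j ≤ n+1 → ∀ i : Fin d,
      (Q j - P1) i = if i.1 = 0 then ε else if i.1 = 1 then (-2:ℝ) else
        if h : i.1 - 2 < d - 2 then w (j-1) ⟨i.1-2, h⟩ else 0 := by
    intro j h1 h2 i
    rw [show (Q j - P1) i = Q j i - P1 i from rfl, hQ j h1 h2, hP1]
    simp only [vec]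
    split_ifs <;> ring
  have habc : ∀ i : Fin d,
      (a - b) i = if i.1 = 0 then ε * (-4/5) else if i.1 = 1 then (-2/5 : ℝ) else 0 := by
    intro i
    rw [show (a - b) i = a i - b i from rfl, ha, hb]
    simp only [vec]
    split_ifs <;> ring
  have hsum' : ∀ i : Fin d, (∑ j ∈ Finset.Icc 2 (n+1), (Q j - P1)) i
      = if i.1 = 0 then (n:ℝ) * ε else if i.1 = 1 then (n:ℝ) * (-2) else 0 := by
    intro i
    rw [show (∑ j ∈ Finset.Icc 2 (n+1), (Q j - P1)) i
        = ∑ j ∈ Finset.Icc 2 (n+1), (Q j - P1) i from by rw [WithLp.ofLp_sum, Finset.sum_apply]]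
    rw [Finset.sum_congr rfl (fun j hj => by
      simp only [Finset.mem_Icc] at hj; exact hQc j hj.1 hj.2 i)]
    by_cases h0 : i.1 = 0
    · simp [h0, Finset.sum_const, Nat.card_Icc, mul_comm]
    by_cases h1 : i.1 = 1
    · simp [h0, h1, Finset.sum_const, Nat.card_Icc, mul_comm]
    · simp only [h0, h1, if_false]
      by_cases h2 : i.1 - 2 < d - 2
      · simp only [dif_pos h2]
        have hz := hsum ⟨i.1-2, h2⟩
        calc ∑ j ∈ Finset.Icc 2 (n+1), w (j-1) ⟨i.1-2, h2⟩
            = ∑ k ∈ Finset.Icc 1 n, w k ⟨i.1-2, h2⟩ := by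
              apply Finset.sum_nbij' (fun j => j-1) (fun k => k+1) <;>
                intros a ha <;> simp only [Finset.mem_Icc] at * <;> omega
          _ = 0 := hz
      · simp [dif_neg h2]
  have hP1S : P1 ∈ affineSpan ℝ s := subset_affineSpan ℝ s hP1s
  have hdirsum : (∑ j ∈ Finset.Icc 2 (n+1), (Q j - P1)) ∈ (affineSpan ℝ s).direction := by
    apply Submodule.sum_mem
    intro j hj
    simp only [Finset.mem_Icc] at hj
    have := AffineSubspace.vsub_mem_direction
      (subset_affineSpan ℝ s (hQmem j hj.1 hj.2)) hP1S
    simpa using this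
  have hvdir : ((13/(20*(n:ℝ))) • ∑ j ∈ Finset.Icc 2 (n+1), (Q j - P1))
      ∈ (affineSpan ℝ s).direction := Submodule.smul_mem _ _ hdirsum
  have hmid : midpoint ℝ a b
      = ((13/(20*(n:ℝ))) • ∑ j ∈ Finset.Icc 2 (n+1), (Q j - P1)) +ᵥ P1 := by
    rw [midpoint_eq_smul_add, invOf_eq_inv]
    ext i
    have hss := hsum' i
    rw [show ((2:ℝ)⁻¹ • (a + b)) i = 2⁻¹ * (a i + b i) from rfl,
      show (((13/(20*(n:ℝ))) • ∑ j ∈ Finset.Icc 2 (n+1), (Q j - P1)) +ᵥ P1) i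
        = (13/(20*(n:ℝ))) * ((∑ j ∈ Finset.Icc 2 (n+1), (Q j - P1)) i) + P1 i from rfl,
      hss, ha, hb, hP1]
    simp only [vec]
    by_cases h0 : i.1 = 0
    · simp only [h0, if_true]
      field_simp
      ring
    by_cases h1 : i.1 = 1
    · simp only [h0, h1, one_ne_zero, ↓reduceIte, if_false, if_true]
      field_simp
      ring
    · simp only [h0, h1, if_false]
      by_cases h2 : i.1 - 2 < d - 2 <;> simp [h2]
  constructor
  · rw [hmid]
    exact AffineSubspace.vadd_mem_of_mem_direction hvdir hP1S
  · intro v hv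
    rw [direction_affineSpan, vectorSpan_eq_span_vsub_set_right ℝ hP1s] at hv
    have hle : Submodule.span ℝ ((fun x => x -ᵥ P1) '' s)
        ≤ (Submodule.span ℝ {a - b})ᗮ := by
      rw [Submodule.span_le]
      rintro _ ⟨x, hx, rfl⟩
      rw [SetLike.mem_coe, Submodule.mem_orthogonal_singleton_iff_inner_right]
      rcases hx with hx | ⟨j, hj1, hj2, rfl⟩
      · rw [Set.mem_singleton_iff.mp hx]
        simp
      · have hinner : ⟪a - b, Q j -ᵥ P1⟫ = ∑ i : Fin d, (a - b) i * (Q j - P1) i := by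
          rw [show Q j -ᵥ P1 = Q j - P1 from rfl, PiLp.inner_apply]
          simp [RCLike.inner_apply, mul_comm]
        rw [hinner]
        have hzero : ∀ i ∈ Finset.univ, i ∉ ({i0, i1} : Finset (Fin d)) →
            (a - b) i * (Q j - P1) i = 0 := by
          intro i _ hi
          simp only [Finset.mem_insert, Finset.mem_singleton, not_or] at hi
          have h0 : i.1 ≠ 0 := fun h => hi.1 (Fin.ext h)
          have h1 : i.1 ≠ 1 := fun h => hi.2 (Fin.ext h)
          rw [habc i, if_neg h0, if_neg h1, zero_mul]
        rw [← Finset.sum_subset (Finset.subset_univ ({i0, i1} : Finset (Fin d))) hzero]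
        have hne : i0 ≠ i1 := by simp [i0, i1, Fin.ext_iff]
        rw [Finset.sum_pair hne, habc i0, habc i1, hQc j hj1 hj2 i0, hQc j hj1 hj2 i1]
        simp only [i0, i1]
        norm_num
        nlinarith [hε]
    exact Submodule.mem_orthogonal_singleton_iff_inner_right.mp (hle hv)


/-- q₂ is the reflection of p₂ in the affine hyperplane spanned by
p₁, p₄, p₆, ..., p_{2^(d-1)+2}, and q₃ is the reflection of p₃ in the affine
hyperplane spanned by p₁, p₅, p₇, ..., p_{2^(d-1)+3}: in each case the midpoint lies
in the affine span and the difference vector is orthogonal to its direction. -/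
theorem stmt_16 (d : ℕ) (hd : 2 ≤ d)
    (w : ℕ → Fin (d-2) → ℝ)
    (hw : ∀ k, 1 ≤ k → k ≤ 2^(d-2) → ∀ i, w k i = 1 ∨ w k i = -1)
    (hwinj : ∀ k l, 1 ≤ k → k ≤ 2^(d-2) → 1 ≤ l → l ≤ 2^(d-2) → w k = w l → k = l)
    (p : ℕ → EuclideanSpace ℝ (Fin d))
    (hp1 : p 1 = vec d 0 2 (fun _ => 0))
    (hp2 : p 2 = vec d (-1/4) (1/2) (fun _ => 0))
    (hp3 : p 3 = vec d (21/20) (9/10) (fun _ => 0))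
    (hpev : ∀ j, 2 ≤ j → j ≤ 2^(d-2)+1 → p (2*j) = vec d (-1) 0 (w (j-1)))
    (hpod : ∀ j, 2 ≤ j → j ≤ 2^(d-2)+1 → p (2*j+1) = vec d 1 0 (w (j-1)))
    (q2 q3 : EuclideanSpace ℝ (Fin d))
    (hq2 : q2 = vec d (-21/20) (9/10) (fun _ => 0))
    (hq3 : q3 = vec d (1/4) (1/2) (fun _ => 0)) :
    (midpoint ℝ (p 2) q2 ∈
        affineSpan ℝ ({p 1} ∪ {x | ∃ j, 2 ≤ j ∧ j ≤ 2^(d-2)+1 ∧ x = p (2*j)}) ∧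
      ∀ v ∈ (affineSpan ℝ
          ({p 1} ∪ {x | ∃ j, 2 ≤ j ∧ j ≤ 2^(d-2)+1 ∧ x = p (2*j)})).direction,
        ⟪p 2 - q2, v⟫ = 0) ∧
    (midpoint ℝ (p 3) q3 ∈
        affineSpan ℝ ({p 1} ∪ {x | ∃ j, 2 ≤ j ∧ j ≤ 2^(d-2)+1 ∧ x = p (2*j+1)}) ∧
      ∀ v ∈ (affineSpan ℝ
          ({p 1} ∪ {x | ∃ j, 2 ≤ j ∧ j ≤ 2^(d-2)+1 ∧ x = p (2*j+1)})).direction,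
        ⟪p 3 - q3, v⟫ = 0) := by

  have hsum := sum_w_zero d w hw hwinj
  constructor
  · have h14 : (-1 : ℝ) * (1/4) = -1/4 := by norm_num
    have h21 : (-1 : ℝ) * (21/20) = -21/20 := by norm_num
    exact master d hd (-1) (by norm_num) w hsum (fun j => p (2*j)) (p 1) (p 2) q2 hp1
      (fun j h1 h2 => hpev j h1 h2) (by rw [h14]; exact hp2) (by rw [h21]; exact hq2)
  · have h14 : (1 : ℝ) * (1/4) = 1/4 := by norm_num
    have h21 : (1 : ℝ) * (21/20) = 21/20 := by norm_num
    have h := master d hd 1 (by norm_num) w hsum (fun j => p (2*j+1)) (p 1) q3 (p 3) hp1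
      (fun j h1 h2 => hpod j h1 h2) (by rw [h14]; exact hq3) (by rw [h21]; exact hp3)
    refine ⟨?_, ?_⟩
    · rw [midpoint_comm]
      exact h.1
    · intro v hv
      have := h.2 v hv
      rw [show p 3 - q3 = -(q3 - p 3) from (neg_sub q3 (p 3)).symm, inner_neg_left, this, neg_zero]
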